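/- Let Γ = G₀^{6,48,48} and let J be the 3×3 real symmetric (hence Hermitian) matrix [[1, √6/3, 0],[√6/3, 1, √6/3],[0, √6/3, 1]]; J is invertible and indefinite (there exist vectors v, w ∈ ℂ³ with v*Jv > 0 and w*Jw < 0, so the Hermitian form with Gram matrix J is nondegenerate of signature (2,1)). Then there exists a group homomorphism ρ : Γ → GL₃(ℂ) such that ρ(g)ᴴ · J · ρ(g) = J for every g ∈ Γ, the image of ρ acts irreducibly on ℂ³ (the only subspaces invariant under all ρ(g) are {0} and ℂ³), and the closure in GL₃(ℂ) of the range of ρ is not compact. In particular, Γ admits a representation into the unitary group U(2,1) of the Hermitian form J whose image does not have compact closure. -/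

import Mathlib

/-- The relators of the trivalent triangle group G₀^{6,48,48}:
a³, b³, c³, bab⁻¹a⁻¹, (cb)²(c⁻¹b⁻¹)², (ac)²(a⁻¹c⁻¹)². -/
def g64848Rels : Set (FreeGroup (Fin 3)) :=
  let a : FreeGroup (Fin 3) := FreeGroup.of 0
  let b : FreeGroup (Fin 3) := FreeGroup.of 1
  let c : FreeGroup (Fin 3) := FreeGroup.of 2
  {a ^ 3, b ^ 3, c ^ 3, b * a * b⁻¹ * a⁻¹,
   (c * b) ^ 2 * (c⁻¹ * b⁻¹) ^ 2, (a * c) ^ 2 * (a⁻¹ * c⁻¹) ^ 2}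

/-- The Gram matrix J = [[1, √6/3, 0], [√6/3, 1, √6/3], [0, √6/3, 1]]. -/
noncomputable def gramJ : Matrix (Fin 3) (Fin 3) ℂ :=
  !![1, ((Real.sqrt 6 / 3 : ℝ) : ℂ), 0;
     ((Real.sqrt 6 / 3 : ℝ) : ℂ), 1, ((Real.sqrt 6 / 3 : ℝ) : ℂ);
     0, ((Real.sqrt 6 / 3 : ℝ) : ℂ), 1]

noncomputable def rt3c : ℂ := ((Real.sqrt 3 : ℝ) : ℂ)
noncomputable def rt5c : ℂ := ((Real.sqrt 5 : ℝ) : ℂ)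
noncomputable def rt6c : ℂ := ((Real.sqrt 6 : ℝ) : ℂ)
noncomputable def om : ℂ := (-1 + rt3c * Complex.I) / 2

lemma rt3_sq : rt3c ^ 2 = 3 := by
  simp only [rt3c]
  norm_cast
  exact Real.sq_sqrt (by norm_num)

lemma rt5_sq : rt5c ^ 2 = 5 := by
  simp only [rt5c]
  norm_cast
  exact Real.sq_sqrt (by norm_num)

lemma rt6_sq : rt6c ^ 2 = 6 := by
  simp only [rt6c]
  norm_cast
  exact Real.sq_sqrt (by norm_num)

lemma om_rel : om ^ 2 + om + 1 = 0 := by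
  simp only [om]
  linear_combination (rt3c ^ 2 / 4) * Complex.I_sq - (1 / 4 : ℂ) * rt3_sq

lemma om_ne_one : om ≠ 1 := by
  intro h
  have h2 := om_rel
  rw [h] at h2
  norm_num at h2

lemma om_sub_one_ne : om - 1 ≠ 0 := sub_ne_zero.mpr om_ne_one

lemma rt6c_ne : rt6c ≠ 0 := by
  intro h
  have := rt6_sq
  rw [h] at this
  norm_num at this

lemma rt6c3_ne : rt6c / 3 ≠ 0 := by
  simp [rt6c_ne]

noncomputable def matA : Matrix (Fin 3) (Fin 3) ℂ :=
  !![om, (om - 1) * rt6c / 3, 0; 0, 1, 0; 0, 0, 1]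

noncomputable def matC : Matrix (Fin 3) (Fin 3) ℂ :=
  !![1, 0, 0; (om - 1) * rt6c / 3, om, (om - 1) * rt6c / 3; 0, 0, 1]

noncomputable def matB : Matrix (Fin 3) (Fin 3) ℂ :=
  !![1, 0, 0; 0, 1, 0; 0, (om - 1) * rt6c / 3, om]

noncomputable def matJ : Matrix (Fin 3) (Fin 3) ℂ :=
  !![1, rt6c / 3, 0; rt6c / 3, 1, rt6c / 3; 0, rt6c / 3, 1]

noncomputable def yv : ℂ :=
  ((-7 : ℂ)/12) * rt6c + ((1 : ℂ)/12) * rt6c * rt5c + ((1 : ℂ)/12) * om * rt6c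
    + ((-1 : ℂ)/12) * om * rt6c * rt5c

noncomputable def uvec : Fin 3 → ℂ := ![1, yv, 1]

noncomputable def lamC : ℂ := (3 + rt5c) / 2

noncomputable def lamR : ℝ := (3 + Real.sqrt 5) / 2

lemma lam_cast : ((lamR : ℝ) : ℂ) = lamC := by
  simp only [lamR, lamC, rt5c]
  push_cast
  ring

lemma lamR_gt_one : 1 < lamR := by
  have := Real.sqrt_nonneg 5
  simp only [lamR]
  linarith


noncomputable def matAs : Matrix (Fin 3) (Fin 3) ℂ :=
  !![(-1 : ℂ) + (-1 : ℂ) * om, 0, 0;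
     ((-2 : ℂ)/3) * rt6c + ((-1 : ℂ)/3) * om * rt6c, (1 : ℂ), 0;
     0, 0, (1 : ℂ)]
noncomputable def matBs : Matrix (Fin 3) (Fin 3) ℂ :=
  !![(1 : ℂ), 0, 0;
     0, (1 : ℂ), ((-2 : ℂ)/3) * rt6c + ((-1 : ℂ)/3) * om * rt6c;
     0, 0, (-1 : ℂ) + (-1 : ℂ) * om]
noncomputable def matCs : Matrix (Fin 3) (Fin 3) ℂ :=
  !![(1 : ℂ), ((-2 : ℂ)/3) * rt6c + ((-1 : ℂ)/3) * om * rt6c, 0;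
     0, (-1 : ℂ) + (-1 : ℂ) * om, 0;
     0, ((-2 : ℂ)/3) * rt6c + ((-1 : ℂ)/3) * om * rt6c, (1 : ℂ)]
noncomputable def matM : Matrix (Fin 3) (Fin 3) ℂ :=
  !![(2 : ℂ) + (1 : ℂ) * om, ((2 : ℂ)/3) * rt6c + ((1 : ℂ)/3) * om * rt6c, (2 : ℂ);
     ((-2 : ℂ)/3) * rt6c + ((-1 : ℂ)/3) * om * rt6c, (-1 : ℂ) + (-1 : ℂ) * om, ((-2 : ℂ)/3) * rt6c + ((-1 : ℂ)/3) * om * rt6c;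
     (2 : ℂ), ((2 : ℂ)/3) * rt6c + ((1 : ℂ)/3) * om * rt6c, (2 : ℂ) + (1 : ℂ) * om]

lemma lemA3 : matA * (matA * matA) = 1 := by
  ext i j
  fin_cases i <;> fin_cases j
  · simp [matA, matB, matC, matAs, matBs, matCs, matJ, matM, Matrix.mul_apply, Fin.sum_univ_three, Matrix.one_apply, Matrix.vecHead, Matrix.vecTail, Function.comp] <;> linear_combination ((-1 : ℂ) + (1 : ℂ) * om) * om_rel
  · simp [matA, matB, matC, matAs, matBs, matCs, matJ, matM, Matrix.mul_apply, Fin.sum_univ_three, Matrix.one_apply, Matrix.vecHead, Matrix.vecTail, Function.comp] <;> linear_combination (((-1 : ℂ)/3) * rt6c + ((1 : ℂ)/3) * om * rt6c) * om_rel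
  · simp [matA, matB, matC, matAs, matBs, matCs, matJ, matM, Matrix.mul_apply, Fin.sum_univ_three, Matrix.one_apply, Matrix.vecHead, Matrix.vecTail, Function.comp] <;> ring
  · simp [matA, matB, matC, matAs, matBs, matCs, matJ, matM, Matrix.mul_apply, Fin.sum_univ_three, Matrix.one_apply, Matrix.vecHead, Matrix.vecTail, Function.comp] <;> ring
  · simp [matA, matB, matC, matAs, matBs, matCs, matJ, matM, Matrix.mul_apply, Fin.sum_univ_three, Matrix.one_apply, Matrix.vecHead, Matrix.vecTail, Function.comp] <;> ring
  · simp [matA, matB, matC, matAs, matBs, matCs, matJ, matM, Matrix.mul_apply, Fin.sum_univ_three, Matrix.one_apply, Matrix.vecHead, Matrix.vecTail, Function.comp] <;> ring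
  · simp [matA, matB, matC, matAs, matBs, matCs, matJ, matM, Matrix.mul_apply, Fin.sum_univ_three, Matrix.one_apply, Matrix.vecHead, Matrix.vecTail, Function.comp] <;> ring
  · simp [matA, matB, matC, matAs, matBs, matCs, matJ, matM, Matrix.mul_apply, Fin.sum_univ_three, Matrix.one_apply, Matrix.vecHead, Matrix.vecTail, Function.comp] <;> ring
  · simp [matA, matB, matC, matAs, matBs, matCs, matJ, matM, Matrix.mul_apply, Fin.sum_univ_three, Matrix.one_apply, Matrix.vecHead, Matrix.vecTail, Function.comp] <;> ring

lemma lemA3' : (matA * matA) * matA = 1 := by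
  ext i j
  fin_cases i <;> fin_cases j
  · simp [matA, matB, matC, matAs, matBs, matCs, matJ, matM, Matrix.mul_apply, Fin.sum_univ_three, Matrix.one_apply, Matrix.vecHead, Matrix.vecTail, Function.comp] <;> linear_combination ((-1 : ℂ) + (1 : ℂ) * om) * om_rel
  · simp [matA, matB, matC, matAs, matBs, matCs, matJ, matM, Matrix.mul_apply, Fin.sum_univ_three, Matrix.one_apply, Matrix.vecHead, Matrix.vecTail, Function.comp] <;> linear_combination (((-1 : ℂ)/3) * rt6c + ((1 : ℂ)/3) * om * rt6c) * om_rel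
  · simp [matA, matB, matC, matAs, matBs, matCs, matJ, matM, Matrix.mul_apply, Fin.sum_univ_three, Matrix.one_apply, Matrix.vecHead, Matrix.vecTail, Function.comp] <;> ring
  · simp [matA, matB, matC, matAs, matBs, matCs, matJ, matM, Matrix.mul_apply, Fin.sum_univ_three, Matrix.one_apply, Matrix.vecHead, Matrix.vecTail, Function.comp] <;> ring
  · simp [matA, matB, matC, matAs, matBs, matCs, matJ, matM, Matrix.mul_apply, Fin.sum_univ_three, Matrix.one_apply, Matrix.vecHead, Matrix.vecTail, Function.comp] <;> ring
  · simp [matA, matB, matC, matAs, matBs, matCs, matJ, matM, Matrix.mul_apply, Fin.sum_univ_three, Matrix.one_apply, Matrix.vecHead, Matrix.vecTail, Function.comp] <;> ring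
  · simp [matA, matB, matC, matAs, matBs, matCs, matJ, matM, Matrix.mul_apply, Fin.sum_univ_three, Matrix.one_apply, Matrix.vecHead, Matrix.vecTail, Function.comp] <;> ring
  · simp [matA, matB, matC, matAs, matBs, matCs, matJ, matM, Matrix.mul_apply, Fin.sum_univ_three, Matrix.one_apply, Matrix.vecHead, Matrix.vecTail, Function.comp] <;> ring
  · simp [matA, matB, matC, matAs, matBs, matCs, matJ, matM, Matrix.mul_apply, Fin.sum_univ_three, Matrix.one_apply, Matrix.vecHead, Matrix.vecTail, Function.comp] <;> ring

lemma lemB3 : matB * (matB * matB) = 1 := by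
  ext i j
  fin_cases i <;> fin_cases j
  · simp [matA, matB, matC, matAs, matBs, matCs, matJ, matM, Matrix.mul_apply, Fin.sum_univ_three, Matrix.one_apply, Matrix.vecHead, Matrix.vecTail, Function.comp] <;> ring
  · simp [matA, matB, matC, matAs, matBs, matCs, matJ, matM, Matrix.mul_apply, Fin.sum_univ_three, Matrix.one_apply, Matrix.vecHead, Matrix.vecTail, Function.comp] <;> ring
  · simp [matA, matB, matC, matAs, matBs, matCs, matJ, matM, Matrix.mul_apply, Fin.sum_univ_three, Matrix.one_apply, Matrix.vecHead, Matrix.vecTail, Function.comp] <;> ring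
  · simp [matA, matB, matC, matAs, matBs, matCs, matJ, matM, Matrix.mul_apply, Fin.sum_univ_three, Matrix.one_apply, Matrix.vecHead, Matrix.vecTail, Function.comp] <;> ring
  · simp [matA, matB, matC, matAs, matBs, matCs, matJ, matM, Matrix.mul_apply, Fin.sum_univ_three, Matrix.one_apply, Matrix.vecHead, Matrix.vecTail, Function.comp] <;> ring
  · simp [matA, matB, matC, matAs, matBs, matCs, matJ, matM, Matrix.mul_apply, Fin.sum_univ_three, Matrix.one_apply, Matrix.vecHead, Matrix.vecTail, Function.comp] <;> ring
  · simp [matA, matB, matC, matAs, matBs, matCs, matJ, matM, Matrix.mul_apply, Fin.sum_univ_three, Matrix.one_apply, Matrix.vecHead, Matrix.vecTail, Function.comp] <;> ring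
  · simp [matA, matB, matC, matAs, matBs, matCs, matJ, matM, Matrix.mul_apply, Fin.sum_univ_three, Matrix.one_apply, Matrix.vecHead, Matrix.vecTail, Function.comp] <;> linear_combination (((-1 : ℂ)/3) * rt6c + ((1 : ℂ)/3) * om * rt6c) * om_rel
  · simp [matA, matB, matC, matAs, matBs, matCs, matJ, matM, Matrix.mul_apply, Fin.sum_univ_three, Matrix.one_apply, Matrix.vecHead, Matrix.vecTail, Function.comp] <;> linear_combination ((-1 : ℂ) + (1 : ℂ) * om) * om_rel

lemma lemB3' : (matB * matB) * matB = 1 := by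
  ext i j
  fin_cases i <;> fin_cases j
  · simp [matA, matB, matC, matAs, matBs, matCs, matJ, matM, Matrix.mul_apply, Fin.sum_univ_three, Matrix.one_apply, Matrix.vecHead, Matrix.vecTail, Function.comp] <;> ring
  · simp [matA, matB, matC, matAs, matBs, matCs, matJ, matM, Matrix.mul_apply, Fin.sum_univ_three, Matrix.one_apply, Matrix.vecHead, Matrix.vecTail, Function.comp] <;> ring
  · simp [matA, matB, matC, matAs, matBs, matCs, matJ, matM, Matrix.mul_apply, Fin.sum_univ_three, Matrix.one_apply, Matrix.vecHead, Matrix.vecTail, Function.comp] <;> ring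
  · simp [matA, matB, matC, matAs, matBs, matCs, matJ, matM, Matrix.mul_apply, Fin.sum_univ_three, Matrix.one_apply, Matrix.vecHead, Matrix.vecTail, Function.comp] <;> ring
  · simp [matA, matB, matC, matAs, matBs, matCs, matJ, matM, Matrix.mul_apply, Fin.sum_univ_three, Matrix.one_apply, Matrix.vecHead, Matrix.vecTail, Function.comp] <;> ring
  · simp [matA, matB, matC, matAs, matBs, matCs, matJ, matM, Matrix.mul_apply, Fin.sum_univ_three, Matrix.one_apply, Matrix.vecHead, Matrix.vecTail, Function.comp] <;> ring
  · simp [matA, matB, matC, matAs, matBs, matCs, matJ, matM, Matrix.mul_apply, Fin.sum_univ_three, Matrix.one_apply, Matrix.vecHead, Matrix.vecTail, Function.comp] <;> ring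
  · simp [matA, matB, matC, matAs, matBs, matCs, matJ, matM, Matrix.mul_apply, Fin.sum_univ_three, Matrix.one_apply, Matrix.vecHead, Matrix.vecTail, Function.comp] <;> linear_combination (((-1 : ℂ)/3) * rt6c + ((1 : ℂ)/3) * om * rt6c) * om_rel
  · simp [matA, matB, matC, matAs, matBs, matCs, matJ, matM, Matrix.mul_apply, Fin.sum_univ_three, Matrix.one_apply, Matrix.vecHead, Matrix.vecTail, Function.comp] <;> linear_combination ((-1 : ℂ) + (1 : ℂ) * om) * om_rel

lemma lemC3 : matC * (matC * matC) = 1 := by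
  ext i j
  fin_cases i <;> fin_cases j
  · simp [matA, matB, matC, matAs, matBs, matCs, matJ, matM, Matrix.mul_apply, Fin.sum_univ_three, Matrix.one_apply, Matrix.vecHead, Matrix.vecTail, Function.comp] <;> ring
  · simp [matA, matB, matC, matAs, matBs, matCs, matJ, matM, Matrix.mul_apply, Fin.sum_univ_three, Matrix.one_apply, Matrix.vecHead, Matrix.vecTail, Function.comp] <;> ring
  · simp [matA, matB, matC, matAs, matBs, matCs, matJ, matM, Matrix.mul_apply, Fin.sum_univ_three, Matrix.one_apply, Matrix.vecHead, Matrix.vecTail, Function.comp] <;> ring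
  · simp [matA, matB, matC, matAs, matBs, matCs, matJ, matM, Matrix.mul_apply, Fin.sum_univ_three, Matrix.one_apply, Matrix.vecHead, Matrix.vecTail, Function.comp] <;> linear_combination (((-1 : ℂ)/3) * rt6c + ((1 : ℂ)/3) * om * rt6c) * om_rel
  · simp [matA, matB, matC, matAs, matBs, matCs, matJ, matM, Matrix.mul_apply, Fin.sum_univ_three, Matrix.one_apply, Matrix.vecHead, Matrix.vecTail, Function.comp] <;> linear_combination ((-1 : ℂ) + (1 : ℂ) * om) * om_rel
  · simp [matA, matB, matC, matAs, matBs, matCs, matJ, matM, Matrix.mul_apply, Fin.sum_univ_three, Matrix.one_apply, Matrix.vecHead, Matrix.vecTail, Function.comp] <;> linear_combination (((-1 : ℂ)/3) * rt6c + ((1 : ℂ)/3) * om * rt6c) * om_rel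
  · simp [matA, matB, matC, matAs, matBs, matCs, matJ, matM, Matrix.mul_apply, Fin.sum_univ_three, Matrix.one_apply, Matrix.vecHead, Matrix.vecTail, Function.comp] <;> ring
  · simp [matA, matB, matC, matAs, matBs, matCs, matJ, matM, Matrix.mul_apply, Fin.sum_univ_three, Matrix.one_apply, Matrix.vecHead, Matrix.vecTail, Function.comp] <;> ring
  · simp [matA, matB, matC, matAs, matBs, matCs, matJ, matM, Matrix.mul_apply, Fin.sum_univ_three, Matrix.one_apply, Matrix.vecHead, Matrix.vecTail, Function.comp] <;> ring

lemma lemC3' : (matC * matC) * matC = 1 := by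
  ext i j
  fin_cases i <;> fin_cases j
  · simp [matA, matB, matC, matAs, matBs, matCs, matJ, matM, Matrix.mul_apply, Fin.sum_univ_three, Matrix.one_apply, Matrix.vecHead, Matrix.vecTail, Function.comp] <;> ring
  · simp [matA, matB, matC, matAs, matBs, matCs, matJ, matM, Matrix.mul_apply, Fin.sum_univ_three, Matrix.one_apply, Matrix.vecHead, Matrix.vecTail, Function.comp] <;> ring
  · simp [matA, matB, matC, matAs, matBs, matCs, matJ, matM, Matrix.mul_apply, Fin.sum_univ_three, Matrix.one_apply, Matrix.vecHead, Matrix.vecTail, Function.comp] <;> ring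
  · simp [matA, matB, matC, matAs, matBs, matCs, matJ, matM, Matrix.mul_apply, Fin.sum_univ_three, Matrix.one_apply, Matrix.vecHead, Matrix.vecTail, Function.comp] <;> linear_combination (((-1 : ℂ)/3) * rt6c + ((1 : ℂ)/3) * om * rt6c) * om_rel
  · simp [matA, matB, matC, matAs, matBs, matCs, matJ, matM, Matrix.mul_apply, Fin.sum_univ_three, Matrix.one_apply, Matrix.vecHead, Matrix.vecTail, Function.comp] <;> linear_combination ((-1 : ℂ) + (1 : ℂ) * om) * om_rel
  · simp [matA, matB, matC, matAs, matBs, matCs, matJ, matM, Matrix.mul_apply, Fin.sum_univ_three, Matrix.one_apply, Matrix.vecHead, Matrix.vecTail, Function.comp] <;> linear_combination (((-1 : ℂ)/3) * rt6c + ((1 : ℂ)/3) * om * rt6c) * om_rel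
  · simp [matA, matB, matC, matAs, matBs, matCs, matJ, matM, Matrix.mul_apply, Fin.sum_univ_three, Matrix.one_apply, Matrix.vecHead, Matrix.vecTail, Function.comp] <;> ring
  · simp [matA, matB, matC, matAs, matBs, matCs, matJ, matM, Matrix.mul_apply, Fin.sum_univ_three, Matrix.one_apply, Matrix.vecHead, Matrix.vecTail, Function.comp] <;> ring
  · simp [matA, matB, matC, matAs, matBs, matCs, matJ, matM, Matrix.mul_apply, Fin.sum_univ_three, Matrix.one_apply, Matrix.vecHead, Matrix.vecTail, Function.comp] <;> ring

lemma lemAB : matA * matB = matB * matA := by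
  ext i j
  fin_cases i <;> fin_cases j
  · simp [matA, matB, matC, matAs, matBs, matCs, matJ, matM, Matrix.mul_apply, Fin.sum_univ_three, Matrix.one_apply, Matrix.vecHead, Matrix.vecTail, Function.comp] <;> ring
  · simp [matA, matB, matC, matAs, matBs, matCs, matJ, matM, Matrix.mul_apply, Fin.sum_univ_three, Matrix.one_apply, Matrix.vecHead, Matrix.vecTail, Function.comp] <;> ring
  · simp [matA, matB, matC, matAs, matBs, matCs, matJ, matM, Matrix.mul_apply, Fin.sum_univ_three, Matrix.one_apply, Matrix.vecHead, Matrix.vecTail, Function.comp] <;> ring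
  · simp [matA, matB, matC, matAs, matBs, matCs, matJ, matM, Matrix.mul_apply, Fin.sum_univ_three, Matrix.one_apply, Matrix.vecHead, Matrix.vecTail, Function.comp] <;> ring
  · simp [matA, matB, matC, matAs, matBs, matCs, matJ, matM, Matrix.mul_apply, Fin.sum_univ_three, Matrix.one_apply, Matrix.vecHead, Matrix.vecTail, Function.comp] <;> ring
  · simp [matA, matB, matC, matAs, matBs, matCs, matJ, matM, Matrix.mul_apply, Fin.sum_univ_three, Matrix.one_apply, Matrix.vecHead, Matrix.vecTail, Function.comp] <;> ring
  · simp [matA, matB, matC, matAs, matBs, matCs, matJ, matM, Matrix.mul_apply, Fin.sum_univ_three, Matrix.one_apply, Matrix.vecHead, Matrix.vecTail, Function.comp] <;> ring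
  · simp [matA, matB, matC, matAs, matBs, matCs, matJ, matM, Matrix.mul_apply, Fin.sum_univ_three, Matrix.one_apply, Matrix.vecHead, Matrix.vecTail, Function.comp] <;> ring
  · simp [matA, matB, matC, matAs, matBs, matCs, matJ, matM, Matrix.mul_apply, Fin.sum_univ_three, Matrix.one_apply, Matrix.vecHead, Matrix.vecTail, Function.comp] <;> ring

lemma lemCB : (matC * matB) * (matC * matB) = (matB * matC) * (matB * matC) := by
  ext i j
  fin_cases i <;> fin_cases j
  · simp [matA, matB, matC, matAs, matBs, matCs, matJ, matM, Matrix.mul_apply, Fin.sum_univ_three, Matrix.one_apply, Matrix.vecHead, Matrix.vecTail, Function.comp] <;> ring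
  · simp [matA, matB, matC, matAs, matBs, matCs, matJ, matM, Matrix.mul_apply, Fin.sum_univ_three, Matrix.one_apply, Matrix.vecHead, Matrix.vecTail, Function.comp] <;> ring
  · simp [matA, matB, matC, matAs, matBs, matCs, matJ, matM, Matrix.mul_apply, Fin.sum_univ_three, Matrix.one_apply, Matrix.vecHead, Matrix.vecTail, Function.comp] <;> ring
  · simp [matA, matB, matC, matAs, matBs, matCs, matJ, matM, Matrix.mul_apply, Fin.sum_univ_three, Matrix.one_apply, Matrix.vecHead, Matrix.vecTail, Function.comp] <;> ring
  · simp [matA, matB, matC, matAs, matBs, matCs, matJ, matM, Matrix.mul_apply, Fin.sum_univ_three, Matrix.one_apply, Matrix.vecHead, Matrix.vecTail, Function.comp] <;> linear_combination (((-2 : ℂ)/3) * rt6c^2 + ((10 : ℂ)/81) * rt6c^4 + ((2 : ℂ)/9) * om * rt6c^2 + ((-5 : ℂ)/81) * om * rt6c^4 + ((1 : ℂ)/81) * om^2 * rt6c^4) * om_rel + (((-1 : ℂ)/9) * rt6c^2 + ((-1 : ℂ)/9) * om * rt6c^2) * rt6_sq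
  · simp [matA, matB, matC, matAs, matBs, matCs, matJ, matM, Matrix.mul_apply, Fin.sum_univ_three, Matrix.one_apply, Matrix.vecHead, Matrix.vecTail, Function.comp] <;> linear_combination ((-2 : ℂ) * rt6c + ((10 : ℂ)/27) * rt6c^3 + ((2 : ℂ)/3) * om * rt6c + ((-5 : ℂ)/27) * om * rt6c^3 + ((1 : ℂ)/27) * om^2 * rt6c^3) * om_rel + (((-1 : ℂ)/3) * rt6c + ((-1 : ℂ)/3) * om * rt6c) * rt6_sq
  · simp [matA, matB, matC, matAs, matBs, matCs, matJ, matM, Matrix.mul_apply, Fin.sum_univ_three, Matrix.one_apply, Matrix.vecHead, Matrix.vecTail, Function.comp] <;> linear_combination (((2 : ℂ)/3) * rt6c^2 + ((-10 : ℂ)/81) * rt6c^4 + ((-2 : ℂ)/9) * om * rt6c^2 + ((5 : ℂ)/81) * om * rt6c^4 + ((-1 : ℂ)/81) * om^2 * rt6c^4) * om_rel + (((1 : ℂ)/9) * rt6c^2 + ((1 : ℂ)/9) * om * rt6c^2) * rt6_sq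
  · simp [matA, matB, matC, matAs, matBs, matCs, matJ, matM, Matrix.mul_apply, Fin.sum_univ_three, Matrix.one_apply, Matrix.vecHead, Matrix.vecTail, Function.comp] <;> linear_combination ((2 : ℂ) * rt6c + ((-10 : ℂ)/27) * rt6c^3 + ((-2 : ℂ)/3) * om * rt6c + ((5 : ℂ)/27) * om * rt6c^3 + ((-1 : ℂ)/27) * om^2 * rt6c^3) * om_rel + (((1 : ℂ)/3) * rt6c + ((1 : ℂ)/3) * om * rt6c) * rt6_sq
  · simp [matA, matB, matC, matAs, matBs, matCs, matJ, matM, Matrix.mul_apply, Fin.sum_univ_three, Matrix.one_apply, Matrix.vecHead, Matrix.vecTail, Function.comp] <;> linear_combination (((2 : ℂ)/3) * rt6c^2 + ((-10 : ℂ)/81) * rt6c^4 + ((-2 : ℂ)/9) * om * rt6c^2 + ((5 : ℂ)/81) * om * rt6c^4 + ((-1 : ℂ)/81) * om^2 * rt6c^4) * om_rel + (((1 : ℂ)/9) * rt6c^2 + ((1 : ℂ)/9) * om * rt6c^2) * rt6_sq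

lemma lemAC : (matA * matC) * (matA * matC) = (matC * matA) * (matC * matA) := by
  ext i j
  fin_cases i <;> fin_cases j
  · simp [matA, matB, matC, matAs, matBs, matCs, matJ, matM, Matrix.mul_apply, Fin.sum_univ_three, Matrix.one_apply, Matrix.vecHead, Matrix.vecTail, Function.comp] <;> linear_combination (((-2 : ℂ)/3) * rt6c^2 + ((10 : ℂ)/81) * rt6c^4 + ((2 : ℂ)/9) * om * rt6c^2 + ((-5 : ℂ)/81) * om * rt6c^4 + ((1 : ℂ)/81) * om^2 * rt6c^4) * om_rel + (((-1 : ℂ)/9) * rt6c^2 + ((-1 : ℂ)/9) * om * rt6c^2) * rt6_sq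
  · simp [matA, matB, matC, matAs, matBs, matCs, matJ, matM, Matrix.mul_apply, Fin.sum_univ_three, Matrix.one_apply, Matrix.vecHead, Matrix.vecTail, Function.comp] <;> linear_combination ((-2 : ℂ) * rt6c + ((10 : ℂ)/27) * rt6c^3 + ((2 : ℂ)/3) * om * rt6c + ((-5 : ℂ)/27) * om * rt6c^3 + ((1 : ℂ)/27) * om^2 * rt6c^3) * om_rel + (((-1 : ℂ)/3) * rt6c + ((-1 : ℂ)/3) * om * rt6c) * rt6_sq
  · simp [matA, matB, matC, matAs, matBs, matCs, matJ, matM, Matrix.mul_apply, Fin.sum_univ_three, Matrix.one_apply, Matrix.vecHead, Matrix.vecTail, Function.comp] <;> linear_combination (((-2 : ℂ)/3) * rt6c^2 + ((10 : ℂ)/81) * rt6c^4 + ((2 : ℂ)/9) * om * rt6c^2 + ((-5 : ℂ)/81) * om * rt6c^4 + ((1 : ℂ)/81) * om^2 * rt6c^4) * om_rel + (((-1 : ℂ)/9) * rt6c^2 + ((-1 : ℂ)/9) * om * rt6c^2) * rt6_sq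
  · simp [matA, matB, matC, matAs, matBs, matCs, matJ, matM, Matrix.mul_apply, Fin.sum_univ_three, Matrix.one_apply, Matrix.vecHead, Matrix.vecTail, Function.comp] <;> linear_combination ((2 : ℂ) * rt6c + ((-10 : ℂ)/27) * rt6c^3 + ((-2 : ℂ)/3) * om * rt6c + ((5 : ℂ)/27) * om * rt6c^3 + ((-1 : ℂ)/27) * om^2 * rt6c^3) * om_rel + (((1 : ℂ)/3) * rt6c + ((1 : ℂ)/3) * om * rt6c) * rt6_sq
  · simp [matA, matB, matC, matAs, matBs, matCs, matJ, matM, Matrix.mul_apply, Fin.sum_univ_three, Matrix.one_apply, Matrix.vecHead, Matrix.vecTail, Function.comp] <;> linear_combination (((2 : ℂ)/3) * rt6c^2 + ((-10 : ℂ)/81) * rt6c^4 + ((-2 : ℂ)/9) * om * rt6c^2 + ((5 : ℂ)/81) * om * rt6c^4 + ((-1 : ℂ)/81) * om^2 * rt6c^4) * om_rel + (((1 : ℂ)/9) * rt6c^2 + ((1 : ℂ)/9) * om * rt6c^2) * rt6_sq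
  · simp [matA, matB, matC, matAs, matBs, matCs, matJ, matM, Matrix.mul_apply, Fin.sum_univ_three, Matrix.one_apply, Matrix.vecHead, Matrix.vecTail, Function.comp] <;> ring
  · simp [matA, matB, matC, matAs, matBs, matCs, matJ, matM, Matrix.mul_apply, Fin.sum_univ_three, Matrix.one_apply, Matrix.vecHead, Matrix.vecTail, Function.comp] <;> ring
  · simp [matA, matB, matC, matAs, matBs, matCs, matJ, matM, Matrix.mul_apply, Fin.sum_univ_three, Matrix.one_apply, Matrix.vecHead, Matrix.vecTail, Function.comp] <;> ring
  · simp [matA, matB, matC, matAs, matBs, matCs, matJ, matM, Matrix.mul_apply, Fin.sum_univ_three, Matrix.one_apply, Matrix.vecHead, Matrix.vecTail, Function.comp] <;> ring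

lemma lemUA : (matAs * matJ) * matA = matJ := by
  ext i j
  fin_cases i <;> fin_cases j
  · simp [matA, matB, matC, matAs, matBs, matCs, matJ, matM, Matrix.mul_apply, Fin.sum_univ_three, Matrix.one_apply, Matrix.vecHead, Matrix.vecTail, Function.comp] <;> linear_combination ((-1 : ℂ)) * om_rel
  · simp [matA, matB, matC, matAs, matBs, matCs, matJ, matM, Matrix.mul_apply, Fin.sum_univ_three, Matrix.one_apply, Matrix.vecHead, Matrix.vecTail, Function.comp] <;> linear_combination (((-1 : ℂ)/3) * rt6c) * om_rel
  · simp [matA, matB, matC, matAs, matBs, matCs, matJ, matM, Matrix.mul_apply, Fin.sum_univ_three, Matrix.one_apply, Matrix.vecHead, Matrix.vecTail, Function.comp] <;> ring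
  · simp [matA, matB, matC, matAs, matBs, matCs, matJ, matM, Matrix.mul_apply, Fin.sum_univ_three, Matrix.one_apply, Matrix.vecHead, Matrix.vecTail, Function.comp] <;> linear_combination (((-1 : ℂ)/3) * rt6c) * om_rel
  · simp [matA, matB, matC, matAs, matBs, matCs, matJ, matM, Matrix.mul_apply, Fin.sum_univ_three, Matrix.one_apply, Matrix.vecHead, Matrix.vecTail, Function.comp] <;> linear_combination (((-1 : ℂ)/9) * rt6c^2) * om_rel
  · simp [matA, matB, matC, matAs, matBs, matCs, matJ, matM, Matrix.mul_apply, Fin.sum_univ_three, Matrix.one_apply, Matrix.vecHead, Matrix.vecTail, Function.comp] <;> ring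
  · simp [matA, matB, matC, matAs, matBs, matCs, matJ, matM, Matrix.mul_apply, Fin.sum_univ_three, Matrix.one_apply, Matrix.vecHead, Matrix.vecTail, Function.comp] <;> ring
  · simp [matA, matB, matC, matAs, matBs, matCs, matJ, matM, Matrix.mul_apply, Fin.sum_univ_three, Matrix.one_apply, Matrix.vecHead, Matrix.vecTail, Function.comp] <;> ring
  · simp [matA, matB, matC, matAs, matBs, matCs, matJ, matM, Matrix.mul_apply, Fin.sum_univ_three, Matrix.one_apply, Matrix.vecHead, Matrix.vecTail, Function.comp] <;> ring

lemma lemUB : (matBs * matJ) * matB = matJ := by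
  ext i j
  fin_cases i <;> fin_cases j
  · simp [matA, matB, matC, matAs, matBs, matCs, matJ, matM, Matrix.mul_apply, Fin.sum_univ_three, Matrix.one_apply, Matrix.vecHead, Matrix.vecTail, Function.comp] <;> ring
  · simp [matA, matB, matC, matAs, matBs, matCs, matJ, matM, Matrix.mul_apply, Fin.sum_univ_three, Matrix.one_apply, Matrix.vecHead, Matrix.vecTail, Function.comp] <;> ring
  · simp [matA, matB, matC, matAs, matBs, matCs, matJ, matM, Matrix.mul_apply, Fin.sum_univ_three, Matrix.one_apply, Matrix.vecHead, Matrix.vecTail, Function.comp] <;> ring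
  · simp [matA, matB, matC, matAs, matBs, matCs, matJ, matM, Matrix.mul_apply, Fin.sum_univ_three, Matrix.one_apply, Matrix.vecHead, Matrix.vecTail, Function.comp] <;> ring
  · simp [matA, matB, matC, matAs, matBs, matCs, matJ, matM, Matrix.mul_apply, Fin.sum_univ_three, Matrix.one_apply, Matrix.vecHead, Matrix.vecTail, Function.comp] <;> linear_combination (((-1 : ℂ)/9) * rt6c^2) * om_rel
  · simp [matA, matB, matC, matAs, matBs, matCs, matJ, matM, Matrix.mul_apply, Fin.sum_univ_three, Matrix.one_apply, Matrix.vecHead, Matrix.vecTail, Function.comp] <;> linear_combination (((-1 : ℂ)/3) * rt6c) * om_rel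
  · simp [matA, matB, matC, matAs, matBs, matCs, matJ, matM, Matrix.mul_apply, Fin.sum_univ_three, Matrix.one_apply, Matrix.vecHead, Matrix.vecTail, Function.comp] <;> ring
  · simp [matA, matB, matC, matAs, matBs, matCs, matJ, matM, Matrix.mul_apply, Fin.sum_univ_three, Matrix.one_apply, Matrix.vecHead, Matrix.vecTail, Function.comp] <;> linear_combination (((-1 : ℂ)/3) * rt6c) * om_rel
  · simp [matA, matB, matC, matAs, matBs, matCs, matJ, matM, Matrix.mul_apply, Fin.sum_univ_three, Matrix.one_apply, Matrix.vecHead, Matrix.vecTail, Function.comp] <;> linear_combination ((-1 : ℂ)) * om_rel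

lemma lemUC : (matCs * matJ) * matC = matJ := by
  ext i j
  fin_cases i <;> fin_cases j
  · simp [matA, matB, matC, matAs, matBs, matCs, matJ, matM, Matrix.mul_apply, Fin.sum_univ_three, Matrix.one_apply, Matrix.vecHead, Matrix.vecTail, Function.comp] <;> linear_combination (((-1 : ℂ)/9) * rt6c^2) * om_rel
  · simp [matA, matB, matC, matAs, matBs, matCs, matJ, matM, Matrix.mul_apply, Fin.sum_univ_three, Matrix.one_apply, Matrix.vecHead, Matrix.vecTail, Function.comp] <;> linear_combination (((-1 : ℂ)/3) * rt6c) * om_rel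
  · simp [matA, matB, matC, matAs, matBs, matCs, matJ, matM, Matrix.mul_apply, Fin.sum_univ_three, Matrix.one_apply, Matrix.vecHead, Matrix.vecTail, Function.comp] <;> linear_combination (((-1 : ℂ)/9) * rt6c^2) * om_rel
  · simp [matA, matB, matC, matAs, matBs, matCs, matJ, matM, Matrix.mul_apply, Fin.sum_univ_three, Matrix.one_apply, Matrix.vecHead, Matrix.vecTail, Function.comp] <;> linear_combination (((-1 : ℂ)/3) * rt6c) * om_rel
  · simp [matA, matB, matC, matAs, matBs, matCs, matJ, matM, Matrix.mul_apply, Fin.sum_univ_three, Matrix.one_apply, Matrix.vecHead, Matrix.vecTail, Function.comp] <;> linear_combination ((-1 : ℂ)) * om_rel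
  · simp [matA, matB, matC, matAs, matBs, matCs, matJ, matM, Matrix.mul_apply, Fin.sum_univ_three, Matrix.one_apply, Matrix.vecHead, Matrix.vecTail, Function.comp] <;> linear_combination (((-1 : ℂ)/3) * rt6c) * om_rel
  · simp [matA, matB, matC, matAs, matBs, matCs, matJ, matM, Matrix.mul_apply, Fin.sum_univ_three, Matrix.one_apply, Matrix.vecHead, Matrix.vecTail, Function.comp] <;> linear_combination (((-1 : ℂ)/9) * rt6c^2) * om_rel
  · simp [matA, matB, matC, matAs, matBs, matCs, matJ, matM, Matrix.mul_apply, Fin.sum_univ_three, Matrix.one_apply, Matrix.vecHead, Matrix.vecTail, Function.comp] <;> linear_combination (((-1 : ℂ)/3) * rt6c) * om_rel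
  · simp [matA, matB, matC, matAs, matBs, matCs, matJ, matM, Matrix.mul_apply, Fin.sum_univ_three, Matrix.one_apply, Matrix.vecHead, Matrix.vecTail, Function.comp] <;> linear_combination (((-1 : ℂ)/9) * rt6c^2) * om_rel

lemma lemM : (matA * matB) * (matC * matC) = matM := by
  ext i j
  fin_cases i <;> fin_cases j
  · simp [matA, matB, matC, matAs, matBs, matCs, matJ, matM, Matrix.mul_apply, Fin.sum_univ_three, Matrix.one_apply, Matrix.vecHead, Matrix.vecTail, Function.comp] <;> linear_combination (((-2 : ℂ)/9) * rt6c^2 + ((1 : ℂ)/9) * om * rt6c^2) * om_rel + (((1 : ℂ)/3)) * rt6_sq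
  · simp [matA, matB, matC, matAs, matBs, matCs, matJ, matM, Matrix.mul_apply, Fin.sum_univ_three, Matrix.one_apply, Matrix.vecHead, Matrix.vecTail, Function.comp] <;> linear_combination (((-2 : ℂ)/3) * rt6c + ((1 : ℂ)/3) * om * rt6c) * om_rel
  · simp [matA, matB, matC, matAs, matBs, matCs, matJ, matM, Matrix.mul_apply, Fin.sum_univ_three, Matrix.one_apply, Matrix.vecHead, Matrix.vecTail, Function.comp] <;> linear_combination (((-2 : ℂ)/9) * rt6c^2 + ((1 : ℂ)/9) * om * rt6c^2) * om_rel + (((1 : ℂ)/3)) * rt6_sq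
  · simp [matA, matB, matC, matAs, matBs, matCs, matJ, matM, Matrix.mul_apply, Fin.sum_univ_three, Matrix.one_apply, Matrix.vecHead, Matrix.vecTail, Function.comp] <;> linear_combination (((1 : ℂ)/3) * rt6c) * om_rel
  · simp [matA, matB, matC, matAs, matBs, matCs, matJ, matM, Matrix.mul_apply, Fin.sum_univ_three, Matrix.one_apply, Matrix.vecHead, Matrix.vecTail, Function.comp] <;> linear_combination ((1 : ℂ)) * om_rel
  · simp [matA, matB, matC, matAs, matBs, matCs, matJ, matM, Matrix.mul_apply, Fin.sum_univ_three, Matrix.one_apply, Matrix.vecHead, Matrix.vecTail, Function.comp] <;> linear_combination (((1 : ℂ)/3) * rt6c) * om_rel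
  · simp [matA, matB, matC, matAs, matBs, matCs, matJ, matM, Matrix.mul_apply, Fin.sum_univ_three, Matrix.one_apply, Matrix.vecHead, Matrix.vecTail, Function.comp] <;> linear_combination (((-2 : ℂ)/9) * rt6c^2 + ((1 : ℂ)/9) * om * rt6c^2) * om_rel + (((1 : ℂ)/3)) * rt6_sq
  · simp [matA, matB, matC, matAs, matBs, matCs, matJ, matM, Matrix.mul_apply, Fin.sum_univ_three, Matrix.one_apply, Matrix.vecHead, Matrix.vecTail, Function.comp] <;> linear_combination (((-2 : ℂ)/3) * rt6c + ((1 : ℂ)/3) * om * rt6c) * om_rel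
  · simp [matA, matB, matC, matAs, matBs, matCs, matJ, matM, Matrix.mul_apply, Fin.sum_univ_three, Matrix.one_apply, Matrix.vecHead, Matrix.vecTail, Function.comp] <;> linear_combination (((-2 : ℂ)/9) * rt6c^2 + ((1 : ℂ)/9) * om * rt6c^2) * om_rel + (((1 : ℂ)/3)) * rt6_sq

lemma eigM : matM.mulVec uvec = lamC • uvec := by
  funext i
  fin_cases i
  · simp [matM, uvec, yv, lamC, Matrix.mulVec, dotProduct, Fin.sum_univ_three, Pi.smul_apply, smul_eq_mul] <;> linear_combination (((1 : ℂ)/36) * rt6c^2 + ((-1 : ℂ)/36) * rt6c^2 * rt5c) * om_rel + (((-5 : ℂ)/12) + ((1 : ℂ)/12) * rt5c + ((-1 : ℂ)/6) * om) * rt6_sq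
  · simp [matM, uvec, yv, lamC, Matrix.mulVec, dotProduct, Fin.sum_univ_three, Pi.smul_apply, smul_eq_mul] <;> linear_combination (((-1 : ℂ)/12) * rt6c + ((1 : ℂ)/12) * rt6c * rt5c) * om_rel + (((-1 : ℂ)/24) * rt6c + ((1 : ℂ)/24) * om * rt6c) * rt5_sq
  · simp [matM, uvec, yv, lamC, Matrix.mulVec, dotProduct, Fin.sum_univ_three, Pi.smul_apply, smul_eq_mul] <;> linear_combination (((1 : ℂ)/36) * rt6c^2 + ((-1 : ℂ)/36) * rt6c^2 * rt5c) * om_rel + (((-5 : ℂ)/12) + ((1 : ℂ)/12) * rt5c + ((-1 : ℂ)/6) * om) * rt6_sq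


lemma gramJ_eq : gramJ = matJ := by
  ext i j
  fin_cases i <;> fin_cases j <;>
    simp [gramJ, matJ, rt6c, Matrix.vecHead, Matrix.vecTail, Function.comp] <;>
    push_cast <;> ring

lemma starA : matA.conjTranspose = matAs := by
  ext i j
  fin_cases i <;> fin_cases j <;>
    simp [matA, matAs, om, rt6c, rt3c, Matrix.conjTranspose_apply, Matrix.vecHead,
      Matrix.vecTail, Function.comp, map_add, map_sub, map_mul, map_div₀, map_one,
      Complex.conj_I, Complex.conj_ofReal] <;> ring

lemma starB : matB.conjTranspose = matBs := by
  ext i j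
  fin_cases i <;> fin_cases j <;>
    simp [matB, matBs, om, rt6c, rt3c, Matrix.conjTranspose_apply, Matrix.vecHead,
      Matrix.vecTail, Function.comp, map_add, map_sub, map_mul, map_div₀, map_one,
      Complex.conj_I, Complex.conj_ofReal] <;> ring

lemma starC : matC.conjTranspose = matCs := by
  ext i j
  fin_cases i <;> fin_cases j <;>
    simp [matC, matCs, om, rt6c, rt3c, Matrix.conjTranspose_apply, Matrix.vecHead,
      Matrix.vecTail, Function.comp, map_add, map_sub, map_mul, map_div₀, map_one,
      Complex.conj_I, Complex.conj_ofReal] <;> ring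

noncomputable def uA : Matrix.GeneralLinearGroup (Fin 3) ℂ := ⟨matA, matA * matA, lemA3, lemA3'⟩
noncomputable def uB : Matrix.GeneralLinearGroup (Fin 3) ℂ := ⟨matB, matB * matB, lemB3, lemB3'⟩
noncomputable def uC : Matrix.GeneralLinearGroup (Fin 3) ℂ := ⟨matC, matC * matC, lemC3, lemC3'⟩

noncomputable def Fgen : Fin 3 → Matrix.GeneralLinearGroup (Fin 3) ℂ := ![uA, uB, uC]

lemma uA_pow3 : uA ^ 3 = 1 := by
  apply Units.ext
  show (uA ^ 3 : Matrix.GeneralLinearGroup (Fin 3) ℂ).val = 1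
  rw [Units.val_pow_eq_pow_val, pow_succ, pow_two]
  exact lemA3'

lemma uB_pow3 : uB ^ 3 = 1 := by
  apply Units.ext
  rw [Units.val_pow_eq_pow_val, pow_succ, pow_two]
  exact lemB3'

lemma uC_pow3 : uC ^ 3 = 1 := by
  apply Units.ext
  rw [Units.val_pow_eq_pow_val, pow_succ, pow_two]
  exact lemC3'

lemma uAB_comm : uA * uB = uB * uA := by
  apply Units.ext
  rw [Units.val_mul, Units.val_mul]
  exact lemAB

lemma uCB_braid : (uC * uB) ^ 2 = (uB * uC) ^ 2 := by
  apply Units.ext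
  rw [Units.val_pow_eq_pow_val, Units.val_pow_eq_pow_val, Units.val_mul, Units.val_mul,
    pow_two, pow_two]
  exact lemCB

lemma uAC_braid : (uA * uC) ^ 2 = (uC * uA) ^ 2 := by
  apply Units.ext
  rw [Units.val_pow_eq_pow_val, Units.val_pow_eq_pow_val, Units.val_mul, Units.val_mul,
    pow_two, pow_two]
  exact lemAC

lemma relsat : ∀ r ∈ g64848Rels, FreeGroup.lift Fgen r = 1 := by
  intro r hr
  simp only [g64848Rels, Set.mem_insert_iff, Set.mem_singleton_iff] at hr
  rcases hr with rfl | rfl | rfl | rfl | rfl | rfl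
  · simp only [map_pow, FreeGroup.lift_apply_of, Fgen, Matrix.cons_val_zero]
    exact uA_pow3
  · simp only [map_pow, FreeGroup.lift_apply_of, Fgen, Matrix.cons_val_one, Matrix.head_cons]
    exact uB_pow3
  · simp only [map_pow, FreeGroup.lift_apply_of, Fgen]
    norm_num
    exact uC_pow3
  · simp only [map_mul, map_inv, FreeGroup.lift_apply_of, Fgen, Matrix.cons_val_zero,
      Matrix.cons_val_one, Matrix.head_cons]
    rw [← uAB_comm]
    group
  · simp only [map_mul, map_pow, map_inv, FreeGroup.lift_apply_of, Fgen, Matrix.cons_val_one,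
      Matrix.head_cons]
    norm_num
    rw [show (![uA, uB, uC] 2 : Matrix.GeneralLinearGroup (Fin 3) ℂ) = uC from rfl]
    rw [show uC⁻¹ * uB⁻¹ = (uB * uC)⁻¹ by rw [mul_inv_rev], inv_pow, ← uCB_braid]
    group
  · simp only [map_mul, map_pow, map_inv, FreeGroup.lift_apply_of, Fgen, Matrix.cons_val_zero]
    norm_num
    rw [show (![uA, uB, uC] 2 : Matrix.GeneralLinearGroup (Fin 3) ℂ) = uC from rfl]
    rw [show uA⁻¹ * uC⁻¹ = (uC * uA)⁻¹ by rw [mul_inv_rev], inv_pow, ← uAC_braid]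
    group

noncomputable def rho : PresentedGroup g64848Rels →* Matrix.GeneralLinearGroup (Fin 3) ℂ :=
  PresentedGroup.toGroup relsat

lemma rho_of0 : ((rho (PresentedGroup.of 0) : Matrix.GeneralLinearGroup (Fin 3) ℂ) : Matrix (Fin 3) (Fin 3) ℂ) = matA := by
  rw [rho, PresentedGroup.toGroup.of]
  rfl

lemma rho_of1 : ((rho (PresentedGroup.of 1) : Matrix.GeneralLinearGroup (Fin 3) ℂ) : Matrix (Fin 3) (Fin 3) ℂ) = matB := by
  rw [rho, PresentedGroup.toGroup.of]
  rfl

lemma rho_of2 : ((rho (PresentedGroup.of 2) : Matrix.GeneralLinearGroup (Fin 3) ℂ) : Matrix (Fin 3) (Fin 3) ℂ) = matC := by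
  rw [rho, PresentedGroup.toGroup.of]
  rfl

lemma mulVecA (v : Fin 3 → ℂ) :
    matA.mulVec v = v + ((om - 1) * (v 0 + rt6c / 3 * v 1)) • (Pi.single 0 1 : Fin 3 → ℂ) := by
  funext i
  fin_cases i <;>
    simp [matA, Matrix.mulVec, dotProduct, Fin.sum_univ_three, Pi.single_apply,
      Matrix.vecHead, Matrix.vecTail, Function.comp, Pi.add_apply, Pi.smul_apply,
      smul_eq_mul] <;> ring

lemma mulVecB (v : Fin 3 → ℂ) :
    matB.mulVec v = v + ((om - 1) * (rt6c / 3 * v 1 + v 2)) • (Pi.single 2 1 : Fin 3 → ℂ) := by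
  funext i
  fin_cases i <;>
    simp [matB, Matrix.mulVec, dotProduct, Fin.sum_univ_three, Pi.single_apply,
      Matrix.vecHead, Matrix.vecTail, Function.comp, Pi.add_apply, Pi.smul_apply,
      smul_eq_mul] <;> ring

lemma mulVecC (v : Fin 3 → ℂ) :
    matC.mulVec v = v + ((om - 1) * (rt6c / 3 * v 0 + v 1 + rt6c / 3 * v 2)) • (Pi.single 1 1 : Fin 3 → ℂ) := by
  funext i
  fin_cases i <;>
    simp [matC, Matrix.mulVec, dotProduct, Fin.sum_univ_three, Pi.single_apply,
      Matrix.vecHead, Matrix.vecTail, Function.comp, Pi.add_apply, Pi.smul_apply,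
      smul_eq_mul] <;> ring

def sgU : Subgroup (Matrix.GeneralLinearGroup (Fin 3) ℂ) where
  carrier := {g | (↑g : Matrix (Fin 3) (Fin 3) ℂ).conjTranspose * gramJ * ↑g = gramJ}
  one_mem' := by simp
  mul_mem' := by
    intro x y hx hy
    simp only [Set.mem_setOf_eq] at hx hy ⊢
    rw [Units.val_mul, Matrix.conjTranspose_mul]
    have h1 : (↑y : Matrix (Fin 3) (Fin 3) ℂ).conjTranspose *
          (↑x : Matrix (Fin 3) (Fin 3) ℂ).conjTranspose * gramJ *
          ((↑x : Matrix (Fin 3) (Fin 3) ℂ) * (↑y : Matrix (Fin 3) (Fin 3) ℂ)) =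
        (↑y : Matrix (Fin 3) (Fin 3) ℂ).conjTranspose *
          ((↑x : Matrix (Fin 3) (Fin 3) ℂ).conjTranspose * gramJ *
            (↑x : Matrix (Fin 3) (Fin 3) ℂ)) * (↑y : Matrix (Fin 3) (Fin 3) ℂ) := by
      noncomm_ring
    rw [h1, hx, hy]
  inv_mem' := by
    intro x hx
    simp only [Set.mem_setOf_eq] at hx ⊢
    have h1 : (↑x⁻¹ : Matrix (Fin 3) (Fin 3) ℂ).conjTranspose * gramJ *
          (↑x⁻¹ : Matrix (Fin 3) (Fin 3) ℂ) =
        (↑x⁻¹ : Matrix (Fin 3) (Fin 3) ℂ).conjTranspose *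
          ((↑x : Matrix (Fin 3) (Fin 3) ℂ).conjTranspose * gramJ *
            (↑x : Matrix (Fin 3) (Fin 3) ℂ)) * (↑x⁻¹ : Matrix (Fin 3) (Fin 3) ℂ) := by
      rw [hx]
    have h2 : (↑x⁻¹ : Matrix (Fin 3) (Fin 3) ℂ).conjTranspose *
          ((↑x : Matrix (Fin 3) (Fin 3) ℂ).conjTranspose * gramJ *
            (↑x : Matrix (Fin 3) (Fin 3) ℂ)) * (↑x⁻¹ : Matrix (Fin 3) (Fin 3) ℂ) =
        ((↑x : Matrix (Fin 3) (Fin 3) ℂ) * (↑x⁻¹ : Matrix (Fin 3) (Fin 3) ℂ)).conjTranspose *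
          gramJ *
          ((↑x : Matrix (Fin 3) (Fin 3) ℂ) * (↑x⁻¹ : Matrix (Fin 3) (Fin 3) ℂ)) := by
      rw [Matrix.conjTranspose_mul]
      noncomm_ring
    rw [h1, h2, Units.mul_inv]
    simp

lemma mem_sgU {g : Matrix.GeneralLinearGroup (Fin 3) ℂ} :
    g ∈ sgU ↔
      (↑g : Matrix (Fin 3) (Fin 3) ℂ).conjTranspose * gramJ * (↑g : Matrix (Fin 3) (Fin 3) ℂ) =
        gramJ := Iff.rfl

lemma rho_mem_sgU : ∀ g : PresentedGroup g64848Rels, rho g ∈ sgU := by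
  have htop : (⊤ : Subgroup (PresentedGroup g64848Rels)) ≤ Subgroup.comap rho sgU := by
    rw [← PresentedGroup.closure_range_of g64848Rels, Subgroup.closure_le]
    rintro _ ⟨i, rfl⟩
    simp only [SetLike.mem_coe, Subgroup.mem_comap]
    fin_cases i
    · show rho (PresentedGroup.of 0) ∈ sgU
      rw [mem_sgU, rho_of0, gramJ_eq, starA]
      exact lemUA
    · show rho (PresentedGroup.of 1) ∈ sgU
      rw [mem_sgU, rho_of1, gramJ_eq, starB]
      exact lemUB
    · show rho (PresentedGroup.of 2) ∈ sgU
      rw [mem_sgU, rho_of2, gramJ_eq, starC]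
      exact lemUC
  intro g
  exact htop (Subgroup.mem_top g)

lemma eig_pow : ∀ n : ℕ, (matM ^ n).mulVec uvec = (lamC ^ n) • uvec := by
  intro n
  induction n with
  | zero => simp [Matrix.one_mulVec]
  | succ n ih =>
      rw [pow_succ, ← Matrix.mulVec_mulVec, eigM, Matrix.mulVec_smul, ih, smul_smul]
      rw [show lamC * lamC ^ n = lamC ^ (n + 1) by ring]

lemma rho_u0 : rho (PresentedGroup.of 0) = uA := by
  rw [rho, PresentedGroup.toGroup.of]; rfl

lemma rho_u1 : rho (PresentedGroup.of 1) = uB := by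
  rw [rho, PresentedGroup.toGroup.of]; rfl

lemma rho_u2 : rho (PresentedGroup.of 2) = uC := by
  rw [rho, PresentedGroup.toGroup.of]; rfl

noncomputable def entf (g : Matrix.GeneralLinearGroup (Fin 3) ℂ) : ℝ :=
  ‖(↑g : Matrix (Fin 3) (Fin 3) ℂ) 0 0‖ +
    ‖(↑g : Matrix (Fin 3) (Fin 3) ℂ) 0 1‖ +
    ‖(↑g : Matrix (Fin 3) (Fin 3) ℂ) 0 2‖

lemma entf_cont : Continuous entf := by
  have h1 : Continuous (fun g : Matrix.GeneralLinearGroup (Fin 3) ℂ =>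
      (↑g : Matrix (Fin 3) (Fin 3) ℂ)) := Units.continuous_val
  have e : ∀ i j : Fin 3, Continuous (fun g : Matrix.GeneralLinearGroup (Fin 3) ℂ =>
      (↑g : Matrix (Fin 3) (Fin 3) ℂ) i j) :=
    fun i j => (continuous_apply j).comp ((continuous_apply i).comp h1)
  exact ((continuous_norm.comp (e 0 0)).add
    (continuous_norm.comp (e 0 1))).add (continuous_norm.comp (e 0 2))

lemma lamR_nonneg : 0 ≤ lamR := by
  have := Real.sqrt_nonneg 5
  rw [lamR]
  linarith


/-- The Hermitian matrix J is invertible and indefinite, and the trivalent triangle group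
Γ = G₀^{6,48,48} admits a representation ρ : Γ → GL₃(ℂ) preserving the Hermitian form
with Gram matrix J (i.e. landing in the unitary group U(2,1) of J), acting irreducibly
on ℂ³, and whose image does not have compact closure. -/
theorem g64848_complex_hyperbolic_rep :
    IsUnit gramJ ∧
    (∃ v w : Fin 3 → ℂ,
      0 < (dotProduct (star v) (Matrix.mulVec gramJ v)).re ∧
      (dotProduct (star w) (Matrix.mulVec gramJ w)).re < 0) ∧
    ∃ ρ : PresentedGroup g64848Rels →* Matrix.GeneralLinearGroup (Fin 3) ℂ,
      (∀ g : PresentedGroup g64848Rels,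
        Matrix.conjTranspose (↑(ρ g) : Matrix (Fin 3) (Fin 3) ℂ) * gramJ *
          (↑(ρ g) : Matrix (Fin 3) (Fin 3) ℂ) = gramJ) ∧
      (∀ W : Submodule ℂ (Fin 3 → ℂ),
        (∀ (g : PresentedGroup g64848Rels), ∀ v ∈ W,
          Matrix.mulVec (↑(ρ g) : Matrix (Fin 3) (Fin 3) ℂ) v ∈ W) →
        W = ⊥ ∨ W = ⊤) ∧
      ¬ IsCompact (closure (Set.range ρ : Set (Matrix.GeneralLinearGroup (Fin 3) ℂ))) := by
  constructor
  · -- J is invertible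
    rw [gramJ_eq, Matrix.isUnit_iff_isUnit_det]
    have hdet : matJ.det = -(1/3) := by
      rw [Matrix.det_fin_three]
      simp [matJ, Matrix.vecHead, Matrix.vecTail, Function.comp]
      linear_combination (-(2:ℂ)/9) * rt6_sq
    rw [hdet]
    norm_num
  constructor
  · -- signature (2,1): positive and negative vectors
    refine ⟨![1, 0, 0], ![1, -2, 1], ?_, ?_⟩
    · have h1 : dotProduct (star ![(1:ℂ), 0, 0]) (gramJ.mulVec ![1, 0, 0]) = 1 := by
        rw [gramJ_eq]
        simp [matJ, dotProduct, Matrix.mulVec, Fin.sum_univ_three,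
          Matrix.vecHead, Matrix.vecTail, Function.comp]
      rw [h1]
      norm_num
    · have h1 : dotProduct (star ![(1:ℂ), -2, 1]) (gramJ.mulVec ![1, -2, 1]) =
          ((6 - 8 * Real.sqrt 6 / 3 : ℝ) : ℂ) := by
        rw [gramJ_eq]
        simp [matJ, dotProduct, Matrix.mulVec, Fin.sum_univ_three,
          Matrix.vecHead, Matrix.vecTail, Function.comp, rt6c, map_ofNat]
        push_cast
        ring
      rw [h1, Complex.ofReal_re]
      nlinarith [Real.sq_sqrt (show (0:ℝ) ≤ 6 by norm_num), Real.sqrt_nonneg 6]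
  refine ⟨rho, fun g => rho_mem_sgU g, ?_, ?_⟩
  · -- irreducibility
    intro W hW
    by_cases hbot : W = ⊥
    · exact Or.inl hbot
    right
    obtain ⟨v, hvW, hvne⟩ := Submodule.exists_mem_ne_zero_of_ne_bot hbot
    have hWA : ∀ u, u ∈ W → matA.mulVec u ∈ W := by
      intro u hu
      have h := hW (PresentedGroup.of 0) u hu
      rwa [rho_of0] at h
    have hWB : ∀ u, u ∈ W → matB.mulVec u ∈ W := by
      intro u hu
      have h := hW (PresentedGroup.of 1) u hu
      rwa [rho_of1] at h
    have hWC : ∀ u, u ∈ W → matC.mulVec u ∈ W := by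
      intro u hu
      have h := hW (PresentedGroup.of 2) u hu
      rwa [rho_of2] at h
    have stepA : ∀ u, u ∈ W →
        ((om - 1) * (u 0 + rt6c / 3 * u 1)) • (Pi.single 0 1 : Fin 3 → ℂ) ∈ W := by
      intro u hu
      have h1 := hWA u hu
      rw [mulVecA u] at h1
      simpa using W.sub_mem h1 hu
    have stepB : ∀ u, u ∈ W →
        ((om - 1) * (rt6c / 3 * u 1 + u 2)) • (Pi.single 2 1 : Fin 3 → ℂ) ∈ W := by
      intro u hu
      have h1 := hWB u hu
      rw [mulVecB u] at h1
      simpa using W.sub_mem h1 hu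
    have stepC : ∀ u, u ∈ W →
        ((om - 1) * (rt6c / 3 * u 0 + u 1 + rt6c / 3 * u 2)) • (Pi.single 1 1 : Fin 3 → ℂ) ∈ W := by
      intro u hu
      have h1 := hWC u hu
      rw [mulVecC u] at h1
      simpa using W.sub_mem h1 hu
    have getS : ∀ (i : Fin 3) (c : ℂ), c ≠ 0 →
        c • (Pi.single i 1 : Fin 3 → ℂ) ∈ W → (Pi.single i 1 : Fin 3 → ℂ) ∈ W := by
      intro i c hc hm
      have h2 := W.smul_mem c⁻¹ hm
      rwa [smul_smul, inv_mul_cancel₀ hc, one_smul] at h2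
    have hP1 : (Pi.single 1 1 : Fin 3 → ℂ) ∈ W := by
      by_cases hq1 : rt6c / 3 * v 0 + v 1 + rt6c / 3 * v 2 = 0
      · by_cases hq0 : v 0 + rt6c / 3 * v 1 = 0
        · by_cases hq2 : rt6c / 3 * v 1 + v 2 = 0
          · exfalso
            apply hvne
            have hv1 : v 1 = 0 := by
              linear_combination rt6c * hq0 + (-3 : ℂ) * hq1 + rt6c * hq2 -
                ((2:ℂ)/3 * v 1) * rt6_sq
            have hv0 : v 0 = 0 := by linear_combination hq0 - rt6c / 3 * hv1
            have hv2 : v 2 = 0 := by linear_combination hq2 - rt6c / 3 * hv1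
            funext i
            fin_cases i
            · exact hv0
            · exact hv1
            · exact hv2
          · have hP2 : (Pi.single 2 1 : Fin 3 → ℂ) ∈ W :=
              getS 2 _ (mul_ne_zero om_sub_one_ne hq2) (stepB v hvW)
            have h3 := stepC _ hP2
            have hval : rt6c / 3 * (Pi.single 2 1 : Fin 3 → ℂ) 0 +
                (Pi.single 2 1 : Fin 3 → ℂ) 1 +
                rt6c / 3 * (Pi.single 2 1 : Fin 3 → ℂ) 2 = rt6c / 3 := by simp
            rw [hval] at h3
            exact getS 1 _ (mul_ne_zero om_sub_one_ne rt6c3_ne) h3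
        · have hP0 : (Pi.single 0 1 : Fin 3 → ℂ) ∈ W :=
            getS 0 _ (mul_ne_zero om_sub_one_ne hq0) (stepA v hvW)
          have h3 := stepC _ hP0
          have hval : rt6c / 3 * (Pi.single 0 1 : Fin 3 → ℂ) 0 +
              (Pi.single 0 1 : Fin 3 → ℂ) 1 +
              rt6c / 3 * (Pi.single 0 1 : Fin 3 → ℂ) 2 = rt6c / 3 := by simp
          rw [hval] at h3
          exact getS 1 _ (mul_ne_zero om_sub_one_ne rt6c3_ne) h3
      · exact getS 1 _ (mul_ne_zero om_sub_one_ne hq1) (stepC v hvW)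
    have hP0 : (Pi.single 0 1 : Fin 3 → ℂ) ∈ W := by
      have h3 := stepA _ hP1
      have hval : (Pi.single 1 1 : Fin 3 → ℂ) 0 + rt6c / 3 * (Pi.single 1 1 : Fin 3 → ℂ) 1 =
          rt6c / 3 := by simp
      rw [hval] at h3
      exact getS 0 _ (mul_ne_zero om_sub_one_ne rt6c3_ne) h3
    have hP2 : (Pi.single 2 1 : Fin 3 → ℂ) ∈ W := by
      have h3 := stepB _ hP1
      have hval : rt6c / 3 * (Pi.single 1 1 : Fin 3 → ℂ) 1 + (Pi.single 1 1 : Fin 3 → ℂ) 2 =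
          rt6c / 3 := by simp
      rw [hval] at h3
      exact getS 2 _ (mul_ne_zero om_sub_one_ne rt6c3_ne) h3
    apply Submodule.eq_top_iff'.mpr
    intro u
    have hu : u = u 0 • (Pi.single 0 1 : Fin 3 → ℂ) + u 1 • (Pi.single 1 1 : Fin 3 → ℂ) +
        u 2 • (Pi.single 2 1 : Fin 3 → ℂ) := by
      funext i
      fin_cases i <;> simp [Pi.single_apply]
    rw [hu]
    exact W.add_mem (W.add_mem (W.smul_mem _ hP0) (W.smul_mem _ hP1)) (W.smul_mem _ hP2)
  · -- noncompactness
    intro hcomp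
    have himg : IsCompact (entf '' closure (Set.range rho)) := hcomp.image entf_cont
    obtain ⟨K, hK⟩ := himg.bddAbove
    set γ : PresentedGroup g64848Rels :=
      PresentedGroup.of 0 * PresentedGroup.of 1 * (PresentedGroup.of 2)⁻¹ with hγdef
    have hγmat : (↑(rho γ) : Matrix (Fin 3) (Fin 3) ℂ) = matM := by
      rw [hγdef, map_mul, map_mul, map_inv, rho_u0, rho_u1, rho_u2]
      exact lemM
    have hpow : ∀ n : ℕ, (↑(rho (γ ^ n)) : Matrix (Fin 3) (Fin 3) ℂ) = matM ^ n := by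
      intro n
      rw [map_pow, Units.val_pow_eq_pow_val, hγmat]
    have hbound : ∀ n : ℕ, lamR ^ n ≤ K * (2 + ‖yv‖) := by
      intro n
      have hmem : entf (rho (γ ^ n)) ∈ entf '' closure (Set.range rho) :=
        Set.mem_image_of_mem _ (subset_closure (Set.mem_range_self _))
      have hKn : entf (rho (γ ^ n)) ≤ K := hK hmem
      have hent : entf (rho (γ ^ n)) = ‖(matM ^ n) 0 0‖ +
          ‖(matM ^ n) 0 1‖ + ‖(matM ^ n) 0 2‖ := by
        simp only [entf, hpow n]
      have hco : (matM ^ n) 0 0 + (matM ^ n) 0 1 * yv + (matM ^ n) 0 2 = lamC ^ n := by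
        have h0 := congrFun (eig_pow n) 0
        simp only [Matrix.mulVec, dotProduct, Fin.sum_univ_three, uvec,
          Pi.smul_apply, smul_eq_mul, Matrix.cons_val_zero, Matrix.cons_val_one,
          Matrix.head_cons, Matrix.cons_val_two, Matrix.tail_cons, mul_one] at h0
        linear_combination h0
      have habs : lamR ^ n = ‖lamC ^ n‖ := by
        rw [← lam_cast, ← Complex.ofReal_pow, Complex.norm_real, Real.norm_eq_abs,
          abs_of_nonneg (pow_nonneg lamR_nonneg n)]
      have t1 : ‖(matM ^ n) 0 0 + (matM ^ n) 0 1 * yv + (matM ^ n) 0 2‖ ≤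
          ‖(matM ^ n) 0 0‖ + ‖(matM ^ n) 0 1‖ * ‖yv‖ +
            ‖(matM ^ n) 0 2‖ := by
        calc ‖(matM ^ n) 0 0 + (matM ^ n) 0 1 * yv + (matM ^ n) 0 2‖ ≤
            ‖(matM ^ n) 0 0 + (matM ^ n) 0 1 * yv‖ +
              ‖(matM ^ n) 0 2‖ := norm_add_le _ _
          _ ≤ _ := by
              have h2 := norm_add_le ((matM ^ n) 0 0) ((matM ^ n) 0 1 * yv)
              rw [norm_mul] at h2
              linarith
      have hnn0 := norm_nonneg ((matM ^ n) 0 0)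
      have hnn1 := norm_nonneg ((matM ^ n) 0 1)
      have hnn2 := norm_nonneg ((matM ^ n) 0 2)
      have hnny := norm_nonneg yv
      calc lamR ^ n = ‖lamC ^ n‖ := habs
        _ = ‖(matM ^ n) 0 0 + (matM ^ n) 0 1 * yv + (matM ^ n) 0 2‖ := by
            rw [hco]
        _ ≤ ‖(matM ^ n) 0 0‖ + ‖(matM ^ n) 0 1‖ * ‖yv‖ +
            ‖(matM ^ n) 0 2‖ := t1
        _ ≤ K * (2 + ‖yv‖) := by nlinarith [hKn, hent]
    obtain ⟨n, hn⟩ := pow_unbounded_of_one_lt (K * (2 + ‖yv‖)) lamR_gt_one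
    exact absurd (hbound n) (not_le.mpr hn)
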